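/- Let K be a subfield of Q̄. Then G = span_ℚ G_K ⊕ E_K; that is, for every α ∈ G there exist a unique β ∈ span_ℚ G_K and a unique γ ∈ E_K such that α = βγ. -/

import Mathlib

set_option maxHeartbeats 1000000
set_option synthInstance.maxHeartbeats 400000


noncomputable section

/-- A fixed algebraic closure of `ℚ`. -/
abbrev Qbar : Type := AlgebraicClosure ℚ

/-- The primitive integer minimal polynomial of an algebraic number. -/
noncomputable def intMinpoly (α : Qbar) : Polynomial ℤ :=
  (IsLocalization.integerNormalization (nonZeroDivisors ℤ) (minpoly ℚ α)).primPart

/-- The absolute logarithmic Weil height of an algebraic number, defined via the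
(logarithmic) Mahler measure of its primitive integer minimal polynomial. -/
noncomputable def weilHeight (α : Qbar) : ℝ :=
  ((minpoly ℚ α).natDegree : ℝ)⁻¹ *
    (Real.log |((intMinpoly α).leadingCoeff : ℝ)| +
      (((intMinpoly α).map (Int.castRingHom ℂ)).roots.map
        (fun z => Real.log (max 1 ‖z‖))).sum)

/-- `σ` is an automorphism of `Q̄` fixing `K` pointwise, i.e. `σ ∈ Aut(Q̄/K)`. -/
def fixes (K : Subfield Qbar) (σ : Qbar ≃+* Qbar) : Prop := ∀ x ∈ K, σ x = x

/-- The group `Q̄^×`. -/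
abbrev Qx : Type := Qbarˣ

/-- `G = Q̄^× / Tor(Q̄^×)`. -/
abbrev GG : Type := Qx ⧸ CommGroup.torsion Qx

/-- The Weil height descends to `G`: since `h` is constant on cosets of the torsion
subgroup, the infimum below equals the common value of `h` at any representative. -/
noncomputable def hG (x : GG) : ℝ :=
  sInf {r : ℝ | ∃ u : Qx, (QuotientGroup.mk u : GG) = x ∧ r = weilHeight (u : Qbar)}

/-- The image `G_K` of `K^×` in `G`. -/
def GK (K : Subfield Qbar) : Set GG :=
  {x | ∃ u : Qx, (u : Qbar) ∈ K ∧ (QuotientGroup.mk u : GG) = x}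

/-- `span_ℚ G_K = { β ∈ G : β^m ∈ G_K for some nonzero integer m }`. -/
def spanGK (K : Subfield Qbar) : Set GG :=
  {x | ∃ m : ℤ, m ≠ 0 ∧ x ^ m ∈ GK K}

/-- The action of an automorphism of `Q̄` on `G = Q̄^×/Tor(Q̄^×)`. -/
def autG (σ : Qbar ≃+* Qbar) : GG →* GG :=
  QuotientGroup.map _ _ (Units.map (σ : Qbar →* Qbar))
    (fun u hu => by
      rw [Subgroup.mem_comap]
      rw [CommGroup.mem_torsion] at hu ⊢
      exact MonoidHom.isOfFinOrder _ hu)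

/-- The orbit of `x ∈ G` under the action of `Aut(Q̄/K)` on `G`. -/
def OrbG (K : Subfield Qbar) (x : GG) : Set GG :=
  {y | ∃ σ : Qbar ≃+* Qbar, fixes K σ ∧ y = autG σ x}

/-- `E_K = { α ∈ G : ∏_{β ∈ Orb_K(α)} β = 1 }`. -/
def EK (K : Subfield Qbar) : Set GG :=
  {x | (∏ᶠ y ∈ OrbG K x, y) = 1}

section Aux

open Polynomial

variable (K : Subfield Qbar)

instance : Algebra.IsAlgebraic K Qbar :=
  haveI : Algebra.IsAlgebraic ℚ Qbar := by
    convert AlgebraicClosure.isAlgebraic ℚ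
    · rfl
    · exact Subsingleton.elim _ _
  Algebra.IsAlgebraic.tower_top (K := ℚ) K

instance : IsAlgClosure K Qbar := ⟨inferInstance, inferInstance⟩

/-- Upgrade a ring automorphism fixing `K` to a `K`-algebra automorphism. -/
def toAE (σ : Qbar ≃+* Qbar) (h : fixes K σ) : Qbar ≃ₐ[K] Qbar :=
  { σ with commutes' := fun k => h k k.2 }

theorem fixes_refl : fixes K (RingEquiv.refl Qbar) := fun _ _ => rfl

theorem fixes_trans {σ τ : Qbar ≃+* Qbar} (hσ : fixes K σ) (hτ : fixes K τ) :
    fixes K (σ.trans τ) := fun x hx => by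
  simp only [RingEquiv.coe_trans, Function.comp_apply, hσ x hx, hτ x hx]

theorem fixes_symm {σ : Qbar ≃+* Qbar} (hσ : fixes K σ) : fixes K σ.symm := fun x hx => by
  conv_lhs => rw [← hσ x hx]
  rw [RingEquiv.symm_apply_apply]

theorem autG_mk (σ : Qbar ≃+* Qbar) (u : Qx) :
    autG σ (QuotientGroup.mk u) = QuotientGroup.mk (Units.map (σ : Qbar →* Qbar) u) := rfl

theorem autG_trans (σ τ : Qbar ≃+* Qbar) (x : GG) :
    autG τ (autG σ x) = autG (σ.trans τ) x := by
  induction x using QuotientGroup.induction_on with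
  | H u =>
    rw [autG_mk, autG_mk, autG_mk]
    congr 1

theorem autG_refl (x : GG) : autG (RingEquiv.refl Qbar) x = x := by
  induction x using QuotientGroup.induction_on with
  | H u =>
    rw [autG_mk]
    congr 1

theorem autG_injective (σ : Qbar ≃+* Qbar) : Function.Injective (autG σ) := by
  intro x y h
  have h2 := congrArg (autG σ.symm) h
  rwa [autG_trans, autG_trans, RingEquiv.self_trans_symm, autG_refl, autG_refl] at h2

theorem self_mem_orb (x : GG) : x ∈ OrbG K x :=
  ⟨RingEquiv.refl Qbar, fixes_refl K, (autG_refl x).symm⟩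

/-- The set of conjugates of `a` over `K` is finite. -/
theorem conj_finite (a : Qbar) :
    {b : Qbar | ∃ σ : Qbar ≃+* Qbar, fixes K σ ∧ b = σ a}.Finite := by
  have ha : IsIntegral K a := Algebra.IsIntegral.isIntegral a
  have hne : minpoly K a ≠ 0 := minpoly.ne_zero ha
  apply Set.Finite.subset ((minpoly K a).rootSet_finite Qbar)
  rintro b ⟨σ, hσ, rfl⟩
  rw [Polynomial.mem_rootSet]
  refine ⟨hne, ?_⟩
  have : (Polynomial.aeval ((toAE K σ hσ) a)) (minpoly K a)
      = (toAE K σ hσ) ((Polynomial.aeval a) (minpoly K a)) :=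
    Polynomial.aeval_algHom_apply (toAE K σ hσ).toAlgHom a _
  rw [minpoly.aeval, map_zero] at this
  exact this

open scoped Classical in
/-- An auxiliary map sending a nonzero algebraic number to its class in `G`. -/
def toGG : Qbar → GG := fun b =>
  if h : b = 0 then 1 else QuotientGroup.mk (Units.mk0 b h)

theorem orb_finite (x : GG) : (OrbG K x).Finite := by
  obtain ⟨u, rfl⟩ := QuotientGroup.mk_surjective x
  apply Set.Finite.subset ((conj_finite K (u : Qbar)).image toGG)
  rintro y ⟨σ, hσ, rfl⟩
  have hσa : σ (u : Qbar) ≠ 0 := fun h => u.ne_zero (by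
    have := congrArg σ.symm h
    rwa [RingEquiv.symm_apply_apply, map_zero] at this)
  refine ⟨σ (u : Qbar), ⟨σ, hσ, rfl⟩, ?_⟩
  rw [autG_mk]
  simp only [toGG, dif_neg hσa]
  congr 1
  exact Units.ext rfl

theorem orb_image {τ : Qbar ≃+* Qbar} (hτ : fixes K τ) (x : GG) :
    autG τ '' OrbG K x = OrbG K x := by
  ext y
  constructor
  · rintro ⟨z, ⟨σ, hσ, rfl⟩, rfl⟩
    exact ⟨σ.trans τ, fixes_trans K hσ hτ, autG_trans σ τ x⟩
  · rintro ⟨σ, hσ, rfl⟩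
    refine ⟨autG (σ.trans τ.symm) x, ⟨σ.trans τ.symm, fixes_trans K hσ (fixes_symm K hτ), rfl⟩, ?_⟩
    rw [autG_trans]
    have h3 : (σ.trans τ.symm).trans τ = σ := by
      ext b
      simp
    rw [h3]

theorem prod_orb_fixed {τ : Qbar ≃+* Qbar} (hτ : fixes K τ) (x : GG) :
    autG τ (∏ᶠ y ∈ OrbG K x, y) = ∏ᶠ y ∈ OrbG K x, y := by
  classical
  have hfin := orb_finite K x
  rw [finprod_mem_eq_finite_toFinset_prod _ hfin, map_prod]
  rw [← Finset.prod_image (f := fun y : GG => y) (g := ⇑(autG τ))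
    (fun a _ b _ h => autG_injective τ h)]
  congr 1
  apply Finset.coe_injective
  rw [Finset.coe_image, hfin.coe_toFinset, orb_image K hτ]

theorem orb_mul_fixed (x c : GG) (hc : ∀ σ : Qbar ≃+* Qbar, fixes K σ → autG σ c = c) :
    OrbG K (x * c) = (fun y => y * c) '' OrbG K x := by
  ext y
  constructor
  · rintro ⟨σ, hσ, rfl⟩
    exact ⟨autG σ x, ⟨σ, hσ, rfl⟩, by rw [map_mul, hc σ hσ]⟩
  · rintro ⟨z, ⟨σ, hσ, rfl⟩, rfl⟩
    exact ⟨σ, hσ, by rw [map_mul, hc σ hσ]⟩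

theorem prod_orb_mul_fixed (x c : GG) (hc : ∀ σ : Qbar ≃+* Qbar, fixes K σ → autG σ c = c) :
    ∏ᶠ y ∈ OrbG K (x * c), y
      = (∏ᶠ y ∈ OrbG K x, y) * c ^ (orb_finite K x).toFinset.card := by
  classical
  rw [orb_mul_fixed K x c hc,
    finprod_mem_image (fun a _ b _ h => mul_right_cancel h),
    finprod_mem_eq_finite_toFinset_prod _ (orb_finite K x),
    finprod_mem_eq_finite_toFinset_prod _ (orb_finite K x),
    Finset.prod_mul_distrib, Finset.prod_const]

/-- `G` is torsion-free. -/
theorem GG_tf (x : GG) (m : ℤ) (hm : m ≠ 0) (h : x ^ m = 1) : x = 1 := by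
  obtain ⟨u, rfl⟩ := QuotientGroup.mk_surjective x
  rw [← QuotientGroup.mk_zpow, QuotientGroup.eq_one_iff, CommGroup.mem_torsion,
    isOfFinOrder_iff_zpow_eq_one] at h
  rw [QuotientGroup.eq_one_iff, CommGroup.mem_torsion, isOfFinOrder_iff_zpow_eq_one]
  obtain ⟨n, hn, hn'⟩ := h
  exact ⟨m * n, mul_ne_zero hm hn, by rwa [zpow_mul]⟩

theorem GG_zpow_inj {x y : GG} {m : ℤ} (hm : m ≠ 0) (h : x ^ m = y ^ m) : x = y := by
  have h1 : (x / y) ^ m = 1 := by rw [div_zpow, h, div_self']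
  have h2 := GG_tf (x / y) m hm h1
  rwa [div_eq_one] at h2

theorem GG_pow_inj {x y : GG} {n : ℕ} (hn : n ≠ 0) (h : x ^ n = y ^ n) : x = y := by
  refine GG_zpow_inj (m := (n : ℤ)) (Int.natCast_ne_zero.mpr hn) ?_
  rwa [zpow_natCast, zpow_natCast]

/-- `G` is divisible. -/
theorem GG_root (x : GG) (n : ℕ) (hn : 0 < n) : ∃ y : GG, y ^ n = x := by
  obtain ⟨u, rfl⟩ := QuotientGroup.mk_surjective x
  obtain ⟨b, hb⟩ := IsAlgClosed.exists_pow_nat_eq (k := Qbar) (u : Qbar) hn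
  have hb0 : b ≠ 0 := by
    rintro rfl
    exact u.ne_zero (by rw [← hb, zero_pow hn.ne'])
  refine ⟨QuotientGroup.mk (Units.mk0 b hb0), ?_⟩
  rw [← QuotientGroup.mk_pow]
  congr 1
  exact Units.ext (by simpa using hb)

/-- An element of `Q̄` fixed by every automorphism over `K` lies in `K`. -/
theorem mem_of_fixed (b : Qbar) (h : ∀ σ : Qbar ≃+* Qbar, fixes K σ → σ b = b) : b ∈ K := by
  have hb : IsIntegral K b := Algebra.IsIntegral.isIntegral b
  have hsep : (minpoly K b).Separable := Algebra.IsSeparable.isSeparable K b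
  have hsplit : Splits ((minpoly K b).map (algebraMap K Qbar)) := IsAlgClosed.splits _
  have hmem : b ∈ (minpoly K b).rootSet Qbar := by
    rw [Polynomial.mem_rootSet]
    exact ⟨minpoly.ne_zero hb, minpoly.aeval K b⟩
  have huniq : ∀ y ∈ (minpoly K b).rootSet Qbar, y = b := by
    intro y hy
    rw [Polynomial.mem_rootSet] at hy
    obtain ⟨σ, hσ⟩ := minpoly.exists_algEquiv_of_root (K := K) (L := Qbar)
      (Algebra.IsAlgebraic.isAlgebraic b) hy.2
    have hfix : fixes K σ.toRingEquiv := fun x hx => σ.commutes ⟨x, hx⟩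
    have hb2 : σ b = b := h σ.toRingEquiv hfix
    exact σ.injective (by rw [hσ, hb2])
  have hcard := Polynomial.card_rootSet_eq_natDegree (K := Qbar) hsep hsplit
  have hone : Fintype.card ((minpoly K b).rootSet Qbar) = 1 :=
    Fintype.card_eq_one_iff.mpr ⟨⟨b, hmem⟩, fun y => Subtype.ext (huniq y y.2)⟩
  rw [hone] at hcard
  have : b ∈ (algebraMap K Qbar).range := minpoly.natDegree_eq_one_iff.mp hcard.symm
  obtain ⟨k, hk⟩ := this
  rw [← hk]
  exact k.2

/-- An element of `G` fixed by every automorphism over `K` lies in `span_ℚ G_K`. -/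
theorem fixed_mem_span (x : GG) (hx : ∀ σ : Qbar ≃+* Qbar, fixes K σ → autG σ x = x) :
    x ∈ spanGK K := by
  classical
  obtain ⟨u, rfl⟩ := QuotientGroup.mk_surjective x
  -- the set of "ratio" units σ(u)/u
  have hRfin : {r : Qx | ∃ σ : Qbar ≃+* Qbar, fixes K σ ∧ r = Units.map (σ : Qbar →* Qbar) u * u⁻¹}.Finite := by
    apply Set.Finite.subset (((conj_finite K (u : Qbar)).image (fun b => b * (u : Qbar)⁻¹)).image
      (fun b => if h : b = 0 then 1 else Units.mk0 b h))
    rintro r ⟨σ, hσ, rfl⟩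
    have hσa : σ (u : Qbar) ≠ 0 := fun h => u.ne_zero (by
      have := congrArg σ.symm h
      rwa [RingEquiv.symm_apply_apply, map_zero] at this)
    have hval : σ (u : Qbar) * (u : Qbar)⁻¹ ≠ 0 :=
      mul_ne_zero hσa (inv_ne_zero u.ne_zero)
    refine ⟨σ (u : Qbar) * (u : Qbar)⁻¹, ⟨σ (u : Qbar), ⟨σ, hσ, rfl⟩, rfl⟩, ?_⟩
    simp only [dif_neg hval]
    exact Units.ext (by simp)
  -- each ratio is torsion
  have hRtor : ∀ σ : Qbar ≃+* Qbar, fixes K σ →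
      IsOfFinOrder (Units.map (σ : Qbar →* Qbar) u * u⁻¹) := by
    intro σ hσ
    have h1 : (QuotientGroup.mk (Units.map (σ : Qbar →* Qbar) u * u⁻¹) : GG) = 1 := by
      rw [QuotientGroup.mk_mul, ← autG_mk, hx σ hσ, QuotientGroup.mk_inv, mul_inv_cancel]
    rw [QuotientGroup.eq_one_iff, CommGroup.mem_torsion] at h1
    exact h1
  -- the common exponent
  set m : ℕ := ∏ r ∈ hRfin.toFinset, orderOf r with hm
  have hmpos : 0 < m := by
    apply Finset.prod_pos
    intro r hr
    rw [Set.Finite.mem_toFinset] at hr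
    obtain ⟨σ, hσ, rfl⟩ := hr
    exact (hRtor σ hσ).orderOf_pos
  have hratio : ∀ σ : Qbar ≃+* Qbar, fixes K σ →
      (Units.map (σ : Qbar →* Qbar) u * u⁻¹) ^ m = 1 := by
    intro σ hσ
    apply orderOf_dvd_iff_pow_eq_one.mp
    exact Finset.dvd_prod_of_mem _ (hRfin.mem_toFinset.mpr ⟨σ, hσ, rfl⟩)
  -- a^m is fixed by every automorphism over K
  have hfixb : ∀ σ : Qbar ≃+* Qbar, fixes K σ → σ ((u : Qbar) ^ m) = (u : Qbar) ^ m := by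
    intro σ hσ
    have h1 := hratio σ hσ
    rw [mul_pow, inv_pow, mul_inv_eq_one] at h1
    have h2 := congrArg (Units.val) h1
    simpa using h2
  have hbK : (u : Qbar) ^ m ∈ K := mem_of_fixed K _ hfixb
  refine ⟨(m : ℤ), Int.natCast_ne_zero.mpr hmpos.ne', ⟨u ^ m, ?_, ?_⟩⟩
  · simpa using hbK
  · rw [QuotientGroup.mk_pow, zpow_natCast]

/-- Elements of `span_ℚ G_K` are fixed by every automorphism over `K`. -/
theorem span_fixed {x : GG} (hx : x ∈ spanGK K) :
    ∀ σ : Qbar ≃+* Qbar, fixes K σ → autG σ x = x := by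
  obtain ⟨m, hm, v, hvK, hvx⟩ := hx
  intro σ hσ
  have h1 : autG σ (x ^ m) = x ^ m := by
    rw [← hvx, autG_mk]
    congr 1
    exact Units.ext (hσ _ hvK)
  rw [map_zpow] at h1
  exact GG_zpow_inj hm h1

end Aux

/-- Theorem 6.3 (direct sum decomposition): `G = span_ℚ G_K ⊕ E_K`, i.e. every `α ∈ G`
is uniquely a product `α = βγ` with `β ∈ span_ℚ G_K` and `γ ∈ E_K`. -/
theorem stmt15 (K : Subfield Qbar) (α : GG) :
    ∃! p : GG × GG, p.1 ∈ spanGK K ∧ p.2 ∈ EK K ∧ α = p.1 * p.2 := by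
  classical
  have hfinα := orb_finite K α
  set n : ℕ := hfinα.toFinset.card with hn
  have hnpos : 0 < n :=
    Finset.card_pos.mpr ⟨α, hfinα.mem_toFinset.mpr (self_mem_orb K α)⟩
  set N : GG := ∏ y ∈ hfinα.toFinset, y with hNdef
  have hNprod : ∏ᶠ y ∈ OrbG K α, y = N :=
    finprod_mem_eq_finite_toFinset_prod _ hfinα
  have hNfix : ∀ τ : Qbar ≃+* Qbar, fixes K τ → autG τ N = N := fun τ hτ => by
    rw [← hNprod]; exact prod_orb_fixed K hτ α
  obtain ⟨β, hβ⟩ := GG_root N n hnpos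
  have hβfix : ∀ τ : Qbar ≃+* Qbar, fixes K τ → autG τ β = β := by
    intro τ hτ
    refine GG_pow_inj hnpos.ne' ?_
    rw [← map_pow, hβ, hNfix τ hτ]
  have hβspan : β ∈ spanGK K := fixed_mem_span K β hβfix
  set γ : GG := α * β⁻¹ with hγdef
  have hβinvfix : ∀ σ : Qbar ≃+* Qbar, fixes K σ → autG σ β⁻¹ = β⁻¹ := fun σ hσ => by
    rw [map_inv, hβfix σ hσ]
  have hαeq : α = β * γ := by
    rw [hγdef, mul_comm α β⁻¹, mul_inv_cancel_left]
  have hγEK : γ ∈ EK K := by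
    show ∏ᶠ y ∈ OrbG K (α * β⁻¹), y = 1
    rw [prod_orb_mul_fixed K α β⁻¹ hβinvfix, hNprod, inv_pow]
    show N * (β ^ n)⁻¹ = 1
    rw [hβ, mul_inv_cancel]
  refine ⟨⟨β, γ⟩, ⟨hβspan, hγEK, hαeq⟩, ?_⟩
  rintro ⟨β', γ'⟩ ⟨hβ'span, hγ'EK, hα'⟩
  set δ : GG := β' * β⁻¹ with hδdef
  have hδfix : ∀ σ : Qbar ≃+* Qbar, fixes K σ → autG σ δ = δ := fun σ hσ => by
    rw [hδdef, map_mul, span_fixed K hβ'span σ hσ, hβinvfix σ hσ]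
  have hγγ' : γ = γ' * δ := by
    rw [hδdef, hγdef, hα']
    rw [mul_comm β' γ', mul_assoc]
  -- compute the orbit product of γ using γ = γ' * δ
  have hfinγ' := orb_finite K γ'
  set n' : ℕ := hfinγ'.toFinset.card with hn'
  have hn'pos : 0 < n' :=
    Finset.card_pos.mpr ⟨γ', hfinγ'.mem_toFinset.mpr (self_mem_orb K γ')⟩
  have h1 : (1 : GG) = 1 * δ ^ n' := by
    conv_lhs => rw [← hγEK]
    show ∏ᶠ y ∈ OrbG K γ, y = 1 * δ ^ n'
    rw [hγγ', prod_orb_mul_fixed K γ' δ hδfix, hγ'EK]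
  have hδ1 : δ = 1 := by
    refine GG_tf δ (n' : ℤ) (Int.natCast_ne_zero.mpr hn'pos.ne') ?_
    rw [zpow_natCast]
    rw [one_mul] at h1
    exact h1.symm
  have hββ' : β' = β := by
    rw [hδdef, mul_inv_eq_one] at hδ1
    exact hδ1
  have hγγ'2 : γ' = γ := by
    rw [hγγ', hδ1, mul_one]
  rw [Prod.ext_iff]
  exact ⟨hββ', hγγ'2⟩

end
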